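/- arXiv:2209.08880 — 4 statements merged into one kernel-verified Lean document; each statement's English description precedes it below -/
import Mathlib

section
/- Let a, b, c, d be real numbers with ad − bc = 1 and b > 0, and let f ∈ L¹(ℝ) ∩ L²(ℝ) be such that its linear canonical transform F^{(a,b,c,d)} belongs to L¹(ℝ). Then the function f_𝒜^{(a,b)}(z) := 2 ∫₀^∞ K^{(d,−b,−c,a)}(z, ω) F^{(a,b,c,d)}(ω) dω is a well-defined holomorphic function on the upper half-plane ℂ⁺ = { z ∈ ℂ : Im z > 0 }. -/
open MeasureTheory Complex Filter Topology

/-- The LCT kernel `K^{(a,b,c,d)}(ω, x)` on the real line. -/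
noncomputable def lctKernel (a b c d : ℝ) (ω x : ℝ) : ℂ :=
  ((2 * Real.pi * Complex.I * b) ^ ((2 : ℂ)⁻¹))⁻¹ *
    Complex.exp (Complex.I *
      ((d * ω ^ 2 / (2 * b) - ω * x / b + a * x ^ 2 / (2 * b) : ℝ) : ℂ))

/-- The linear canonical transform of `f` with parameters `(a,b,c,d)`. -/
noncomputable def lct (a b c d : ℝ) (f : ℝ → ℂ) (ω : ℝ) : ℂ :=
  ∫ x : ℝ, lctKernel a b c d ω x * f x

/-- The kernel `K^{(d,−b,−c,a)}(z, ω)` with complex first argument. -/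
noncomputable def lctKernelInv (a b c d : ℝ) (z : ℂ) (ω : ℝ) : ℂ :=
  ((-2 * Real.pi * Complex.I * b) ^ ((2 : ℂ)⁻¹))⁻¹ *
    Complex.exp (Complex.I *
      (-(a : ℂ) * z ^ 2 / (2 * (b : ℂ)) + z * (ω : ℂ) / (b : ℂ) -
        (d : ℂ) * (ω : ℂ) ^ 2 / (2 * (b : ℂ))))

lemma lct_re_eq (a b d : ℝ) (z : ℂ) (ω : ℝ) :
    (Complex.I * (-(a : ℂ) * z ^ 2 / (2 * (b:ℂ)) + z * (ω:ℂ) / (b:ℂ) -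
      (d:ℂ) * (ω:ℂ)^2 / (2*(b:ℂ)))).re = a * (z^2).im / (2*b) - ω * z.im / b := by
  simp [Complex.mul_re, Complex.add_im, Complex.sub_im, Complex.mul_im, Complex.div_im,
    Complex.div_re, Complex.normSq_apply, ← Complex.ofReal_pow]
  rcases eq_or_ne b 0 with h | h
  · simp [h]
  · field_simp; ring

lemma norm_lctKernelInv (a b c d : ℝ) (z : ℂ) (ω : ℝ) :
    ‖lctKernelInv a b c d z ω‖ = ‖(((-2 : ℂ) * Real.pi * Complex.I * b) ^ ((2 : ℂ)⁻¹))⁻¹‖ *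
      Real.exp (a * (z^2).im / (2*b) - ω * z.im / b) := by
  rw [lctKernelInv, norm_mul, Complex.norm_exp, lct_re_eq]

lemma hasDerivAt_lctKernelInv (a b c d : ℝ) (hb : b ≠ 0) (ω : ℝ) (z : ℂ) :
    HasDerivAt (fun z => lctKernelInv a b c d z ω)
      (lctKernelInv a b c d z ω * (Complex.I * (-(a:ℂ) * z / b + ω / b))) z := by
  have h1 : HasDerivAt (fun z : ℂ => Complex.I *
      (-(a : ℂ) * z ^ 2 / (2 * (b:ℂ)) + z * (ω:ℂ) / (b:ℂ) - (d:ℂ) * (ω:ℂ)^2 / (2*(b:ℂ))))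
      (Complex.I * (-(a:ℂ) * z / b + ω / b)) z := by
    have h2 : HasDerivAt (fun z : ℂ => -(a : ℂ) * z ^ 2 / (2 * (b:ℂ)) + z * (ω:ℂ) / (b:ℂ)
        - (d:ℂ) * (ω:ℂ)^2 / (2*(b:ℂ)))
        (-(a:ℂ) * (2 * z) / (2*b) + (ω:ℂ)/b) z := by
      have ha := (((hasDerivAt_pow 2 z).const_mul (-(a:ℂ))).div_const (2*(b:ℂ)))
      have hc := ((hasDerivAt_id z).mul_const ((ω:ℂ))).div_const (b:ℂ)
      have := (ha.add hc).sub_const ((d:ℂ) * (ω:ℂ)^2 / (2*(b:ℂ)))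
      exact this.congr_deriv (by norm_num)
    have := h2.const_mul Complex.I
    have hbc : (b:ℂ) ≠ 0 := by exact_mod_cast hb
    exact this.congr_deriv (by ring)
  simp only [lctKernelInv]
  have := h1.cexp.const_mul ((((-2 : ℂ) * Real.pi * Complex.I * b) ^ ((2 : ℂ)⁻¹))⁻¹)
  exact this.congr_deriv (by ring)

lemma mul_exp_neg_le_one (x : ℝ) : x * Real.exp (-x) ≤ 1 := by
  rcases le_or_gt x 0 with h | h
  · have := Real.exp_pos (-x)
    nlinarith
  · have h1 : x ≤ Real.exp x := (Real.add_one_le_exp x).trans' (by linarith)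
    calc x * Real.exp (-x) ≤ Real.exp x * Real.exp (-x) :=
          mul_le_mul_of_nonneg_right h1 (Real.exp_pos _).le
      _ = 1 := by rw [← Real.exp_add]; simp

/-- the generalized analytic signal
`f_𝒜^{(a,b)}(z) = 2 ∫₀^∞ K^{(d,−b,−c,a)}(z, ω) F^{(a,b,c,d)}(ω) dω`
is well defined and holomorphic on the upper half-plane. -/
theorem generalized_analytic_signal_holomorphic
    (a b c d : ℝ) (hb : 0 < b) (habcd : a * d - b * c = 1)
    (f : ℝ → ℂ) (hf1 : Integrable f) (hf2 : MemLp f 2)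
    (hF : Integrable (lct a b c d f)) :
    (∀ z : ℂ, 0 < z.im →
        IntegrableOn (fun ω : ℝ => lctKernelInv a b c d z ω * lct a b c d f ω)
          (Set.Ioi 0)) ∧
      DifferentiableOn ℂ
        (fun z : ℂ =>
          2 * ∫ ω in Set.Ioi (0 : ℝ), lctKernelInv a b c d z ω * lct a b c d f ω)
        {z : ℂ | 0 < z.im} := by
  have hbne : b ≠ 0 := ne_of_gt hb
  set F : ℝ → ℂ := lct a b c d f with hFdef
  set K : ℝ := ‖(((-2 : ℂ) * Real.pi * Complex.I * b) ^ ((2 : ℂ)⁻¹))⁻¹‖ with hK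
  have hFm : AEStronglyMeasurable F volume := hF.1
  have hker_cont : ∀ z : ℂ, Continuous fun ω : ℝ => lctKernelInv a b c d z ω := by
    intro z
    unfold lctKernelInv
    fun_prop
  have hmeas : ∀ z : ℂ, AEStronglyMeasurable (fun ω : ℝ => lctKernelInv a b c d z ω * F ω)
      (volume.restrict (Set.Ioi 0)) := fun z =>
    (((hker_cont z).aestronglyMeasurable).mul hFm).restrict
  have hint : ∀ z : ℂ, 0 < z.im →
      IntegrableOn (fun ω : ℝ => lctKernelInv a b c d z ω * F ω) (Set.Ioi 0) := by
    intro z hz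
    apply Integrable.mono'
      ((hF.norm.const_mul (K * Real.exp (a * (z^2).im / (2*b)))).restrict
        (s := Set.Ioi 0)) (hmeas z)
    filter_upwards [ae_restrict_mem measurableSet_Ioi] with ω hω
    have hω0 : (0:ℝ) < ω := hω
    rw [norm_mul, norm_lctKernelInv, ← hK]
    gcongr
    have : 0 ≤ ω * z.im / b := div_nonneg (mul_nonneg hω0.le hz.le) hb.le
    linarith
  refine ⟨hint, ?_⟩
  intro z₀ hz₀
  have hz₀' : 0 < z₀.im := hz₀
  set R : ℝ := ‖z₀‖ + z₀.im / 2 with hR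
  set Eb : ℝ := Real.exp (|a| * R^2 / (2*b)) with hEb
  set c₁ : ℝ := |a| * R / b with hc₁
  set C : ℝ := K * Eb * (c₁ + 2 / z₀.im) with hC
  have hc₁0 : 0 ≤ c₁ := by
    have : 0 ≤ ‖z₀‖ := norm_nonneg z₀
    positivity
  have key := hasDerivAt_integral_of_dominated_loc_of_deriv_le
    (μ := volume.restrict (Set.Ioi (0:ℝ)))
    (F := fun z ω => lctKernelInv a b c d z ω * F ω)
    (F' := fun z ω => lctKernelInv a b c d z ω * (Complex.I * (-(a:ℂ) * z / b + ω / b)) * F ω)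
    (x₀ := z₀) (bound := fun ω => C * ‖F ω‖) (s := Metric.ball z₀ (z₀.im / 2))
    (Metric.ball_mem_nhds _ (by positivity))
    (Eventually.of_forall fun z => hmeas z)
    (hint z₀ hz₀')
    (by
      have hcont : Continuous fun ω : ℝ =>
          lctKernelInv a b c d z₀ ω * (Complex.I * (-(a:ℂ) * z₀ / b + ω / b)) := by
        apply (hker_cont z₀).mul
        fun_prop
      exact (hcont.aestronglyMeasurable.mul hFm).restrict)
    (by
      filter_upwards [ae_restrict_mem measurableSet_Ioi] with ω hω z hz
      have hω0 : (0:ℝ) < ω := hω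
      have hd : ‖z - z₀‖ < z₀.im / 2 := by
        exact mem_ball_iff_norm.mp hz
      have hzim : z₀.im / 2 ≤ z.im := by
        have h1 : |(z - z₀).im| ≤ ‖z - z₀‖ := Complex.abs_im_le_norm _
        have h2 : |(z - z₀).im| < z₀.im / 2 := lt_of_le_of_lt h1 hd
        have := abs_lt.mp h2
        simp only [Complex.sub_im] at this
        linarith [this.1]
      have hzR : ‖z‖ ≤ R := by
        calc ‖z‖ = ‖z₀ + (z - z₀)‖ := by ring_nf
          _ ≤ ‖z₀‖ + ‖z - z₀‖ := norm_add_le _ _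
          _ ≤ R := by rw [hR]; linarith
      rw [norm_mul, norm_mul, norm_lctKernelInv]
      apply mul_le_mul_of_nonneg_right _ (norm_nonneg (F ω))
      -- bound the exponential factor
      have hexple : a * (z^2).im / (2*b) - ω * z.im / b
          ≤ |a| * R^2 / (2*b) - ω * (z₀.im/2) / b := by
        have e1 : a * (z^2).im ≤ |a| * R^2 := by
          calc a * (z^2).im ≤ |a * (z^2).im| := le_abs_self _
            _ = |a| * |(z^2).im| := abs_mul _ _
            _ ≤ |a| * ‖z^2‖ :=
                mul_le_mul_of_nonneg_left (Complex.abs_im_le_norm _) (abs_nonneg a)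
            _ = |a| * ‖z‖^2 := by rw [norm_pow]
            _ ≤ |a| * R^2 := by
                apply mul_le_mul_of_nonneg_left _ (abs_nonneg a)
                have h0 : 0 ≤ ‖z‖ := norm_nonneg z
                nlinarith
        have e2 : ω * (z₀.im/2) ≤ ω * z.im := mul_le_mul_of_nonneg_left hzim hω0.le
        have d1 : a * (z^2).im / (2*b) ≤ |a| * R^2 / (2*b) := by gcongr
        have d2 : ω * (z₀.im/2) / b ≤ ω * z.im / b := by gcongr
        linarith
      set x : ℝ := ω * (z₀.im/2) / b with hx
      have hexp : Real.exp (a * (z^2).im / (2*b) - ω * z.im / b) ≤ Eb * Real.exp (-x) := by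
        rw [hEb, ← Real.exp_add]
        apply Real.exp_le_exp.mpr
        rw [hx]; linarith
      have hpsi : ‖Complex.I * (-(a:ℂ) * z / b + (ω:ℂ) / b)‖ ≤ c₁ + ω / b := by
        rw [norm_mul, Complex.norm_I, one_mul]
        calc ‖-(a:ℂ) * z / (b:ℂ) + (ω:ℂ) / (b:ℂ)‖
            ≤ ‖-(a:ℂ) * z / (b:ℂ)‖ + ‖(ω:ℂ) / (b:ℂ)‖ := norm_add_le _ _
          _ = |a| * ‖z‖ / b + ω / b := by
              simp [map_div₀, map_mul, Real.norm_eq_abs,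
                abs_of_pos hb, abs_of_pos hω0]
          _ ≤ c₁ + ω / b := by
              rw [hc₁]
              have : |a| * ‖z‖ / b ≤ |a| * R / b := by gcongr
              linarith
      -- key scalar inequality
      have hK0 : 0 ≤ K := hK ▸ norm_nonneg _
      have hEb0 : 0 < Eb := hEb ▸ Real.exp_pos _
      have him0 : 0 < 2 / z₀.im := div_pos two_pos hz₀'
      have hE1 : Real.exp (-x) ≤ 1 := Real.exp_le_one_iff.mpr (neg_nonpos.mpr (hx ▸
        div_nonneg (mul_nonneg hω0.le (by linarith)) hb.le))
      have hEx : x * Real.exp (-x) ≤ 1 := mul_exp_neg_le_one x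
      have hωb_eq : ω / b = x * (2 / z₀.im) := by rw [hx]; field_simp
      have hEscalar : Real.exp (-x) * (c₁ + ω / b) ≤ c₁ + 2 / z₀.im := by
        calc Real.exp (-x) * (c₁ + ω / b)
            = Real.exp (-x) * c₁ + (x * Real.exp (-x)) * (2 / z₀.im) := by
              rw [hωb_eq]; ring
          _ ≤ 1 * c₁ + 1 * (2 / z₀.im) := by
              apply add_le_add
              · exact mul_le_mul_of_nonneg_right hE1 hc₁0
              · exact mul_le_mul_of_nonneg_right hEx him0.le
          _ = c₁ + 2 / z₀.im := by ring
      rw [← hK]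
      refine le_trans (mul_le_mul (mul_le_mul_of_nonneg_left hexp hK0) hpsi
        (norm_nonneg _)
        (mul_nonneg hK0 (mul_nonneg hEb0.le (Real.exp_pos _).le))) ?_
      have heq : K * (Eb * Real.exp (-x)) * (c₁ + ω / b)
          = K * Eb * (Real.exp (-x) * (c₁ + ω / b)) := by ring
      rw [heq, hC]
      exact mul_le_mul_of_nonneg_left hEscalar (mul_nonneg hK0 hEb0.le))
    ((hF.norm.const_mul C).restrict (s := Set.Ioi 0))
    (Eventually.of_forall fun ω => fun z _ =>
      (hasDerivAt_lctKernelInv a b c d hbne ω z).mul_const (F ω))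
  have hdiff : DifferentiableAt ℂ
      (fun z : ℂ => ∫ ω in Set.Ioi (0:ℝ), lctKernelInv a b c d z ω * F ω) z₀ :=
    key.2.differentiableAt
  exact ((hdiff.const_mul (2:ℂ)).differentiableWithinAt)
end

section
/- Let a, b, c, d be real numbers with ad − bc = 1 and b > 0, let f ∈ L¹(ℝ) ∩ L²(ℝ) with F^{(a,b,c,d)} ∈ L¹(ℝ), and set g(t) = e^{i a t²/(2b)} f(t). Then for every x ∈ ℝ and y > 0, f_𝒜^{(a,b)}(x + iy) = e^{−i a (x+iy)²/(2b)} [ ∫_ℝ P_y(x − t) g(t) dt + i ∫_ℝ Q_y(x − t) g(t) dt ], where f_𝒜^{(a,b)}(z) := 2 ∫₀^∞ K^{(d,−b,−c,a)}(z, ω) F^{(a,b,c,d)}(ω) dω. -/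
open MeasureTheory Complex Filter Topology

lemma sqrtK {b : ℝ} (hb : 0 < b) :
    ((2 * (Real.pi:ℂ) * Complex.I * b) ^ ((2:ℂ)⁻¹)) *
      ((-2 * (Real.pi:ℂ) * Complex.I * b) ^ ((2:ℂ)⁻¹)) = 2 * Real.pi * b := by
  obtain ⟨r, hr, hrr⟩ : ∃ r : ℝ, 0 < r ∧ r = 2 * Real.pi * b :=
    ⟨2 * Real.pi * b, by positivity, rfl⟩
  have h1 : (2 * (Real.pi:ℂ) * Complex.I * b) = (r:ℂ) * Complex.I := by
    rw [hrr]; push_cast; ring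
  have h2 : (-2 * (Real.pi:ℂ) * Complex.I * b) = (r:ℂ) * (-Complex.I) := by
    rw [hrr]; push_cast; ring
  have hz1 : (r:ℂ) * Complex.I ≠ 0 := by simp [Complex.ext_iff, hr.ne']
  have hz2 : (r:ℂ) * (-Complex.I) ≠ 0 := by simp [Complex.ext_iff, hr.ne']
  have harg1 : ((r:ℂ) * Complex.I).arg = Real.pi / 2 := by
    rw [Complex.arg_real_mul _ hr, Complex.arg_I]
  have harg2 : ((r:ℂ) * -Complex.I).arg = -(Real.pi / 2) := by
    rw [Complex.arg_real_mul _ hr, Complex.arg_neg_I]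
  have habs1 : ‖(r:ℂ) * Complex.I‖ = r := by
    simp [map_mul, abs_of_pos hr]
  have habs2 : ‖(r:ℂ) * -Complex.I‖ = r := by
    simp [map_mul, abs_of_pos hr]
  have hlog1 : Complex.log ((r:ℂ) * Complex.I)
      = (Real.log r : ℂ) + (Real.pi/2) * Complex.I := by
    rw [Complex.log, habs1, harg1]; push_cast; ring
  have hlog2 : Complex.log ((r:ℂ) * -Complex.I)
      = (Real.log r : ℂ) - (Real.pi/2) * Complex.I := by
    rw [Complex.log, habs2, harg2]; push_cast; ring
  rw [h1, h2, Complex.cpow_def_of_ne_zero hz1, Complex.cpow_def_of_ne_zero hz2,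
    ← Complex.exp_add, hlog1, hlog2]
  have h3 : ((Real.log r : ℂ) + (Real.pi/2) * Complex.I) * (2:ℂ)⁻¹ +
      ((Real.log r : ℂ) - (Real.pi/2) * Complex.I) * (2:ℂ)⁻¹ = (Real.log r : ℂ) := by ring
  rw [h3, ← Complex.ofReal_exp, Real.exp_log hr, hrr]
  push_cast; ring

lemma integrableOn_cexp_mul_Ioi {s : ℂ} (hs : s.re < 0) :
    IntegrableOn (fun ω : ℝ => Complex.exp (s * ω)) (Set.Ioi (0:ℝ)) := by
  have hb : (0:ℝ) < -s.re := by linarith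
  refine (Integrable.mono' (g := fun ω : ℝ => Real.exp (-(-s.re) * ω))
    (exp_neg_integrableOn_Ioi 0 hb) ?_ ?_)
  · exact (Complex.continuous_exp.comp (continuous_const.mul Complex.continuous_ofReal)).aestronglyMeasurable
  · filter_upwards with ω
    rw [Complex.norm_exp]
    simp [Complex.mul_re]

lemma integral_cexp_mul_Ioi {s : ℂ} (hs : s.re < 0) :
    ∫ ω in Set.Ioi (0:ℝ), Complex.exp (s * ω) = -s⁻¹ := by
  have hs0 : s ≠ 0 := fun h => by simp [h] at hs
  have hderiv : ∀ x ∈ Set.Ici (0:ℝ),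
      HasDerivAt (fun ω : ℝ => Complex.exp (s * ω) / s) (Complex.exp (s * x)) x := by
    intro x _
    have h0 : HasDerivAt (fun ω : ℝ => (ω : ℂ)) 1 x := Complex.ofRealCLM.hasDerivAt
    have h1 : HasDerivAt (fun ω : ℝ => s * (ω:ℂ)) s x := by
      simpa using h0.const_mul s
    have h2 := (Complex.hasDerivAt_exp (s * x)).comp x h1
    have h3 := h2.div_const s
    exact h3.congr_deriv (by rw [mul_div_assoc, div_self hs0, mul_one])
  have htend : Tendsto (fun ω : ℝ => Complex.exp (s * ω) / s) atTop (𝓝 0) := by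
    rw [tendsto_zero_iff_norm_tendsto_zero]
    have : (fun ω : ℝ => ‖Complex.exp (s * ω) / s‖)
        = fun ω : ℝ => Real.exp (s.re * ω) / ‖s‖ := by
      funext ω
      rw [norm_div, Complex.norm_exp]
      simp [Complex.mul_re]
    rw [this]
    have h4 : Tendsto (fun ω : ℝ => s.re * ω) atTop atBot :=
      Tendsto.const_mul_atTop_of_neg hs tendsto_id
    simpa using (Real.tendsto_exp_atBot.comp h4).div_const ‖s‖
  have := integral_Ioi_of_hasDerivAt_of_tendsto' hderiv (integrableOn_cexp_mul_Ioi hs) htend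
  simp only [this]
  simp [hs0]

/-- Poisson-integral representation of the generalized analytic
signal on the upper half-plane. -/
theorem generalized_analytic_signal_poisson_repr
    (a b c d : ℝ) (hb : 0 < b) (habcd : a * d - b * c = 1)
    (f : ℝ → ℂ) (hf1 : Integrable f) (hf2 : MemLp f 2)
    (hF : Integrable (lct a b c d f))
    (g : ℝ → ℂ)
    (hg : ∀ t : ℝ, g t = Complex.exp (Complex.I * ((a * t ^ 2 / (2 * b) : ℝ) : ℂ)) * f t) :
    ∀ x y : ℝ, 0 < y →
      2 * ∫ ω in Set.Ioi (0 : ℝ),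
          lctKernelInv a b c d ((x : ℂ) + (y : ℂ) * Complex.I) ω * lct a b c d f ω =
        Complex.exp (-(Complex.I) * (a : ℂ) * ((x : ℂ) + (y : ℂ) * Complex.I) ^ 2 /
            (2 * (b : ℂ))) *
          ((∫ t : ℝ, ((y / (Real.pi * ((x - t) ^ 2 + y ^ 2)) : ℝ) : ℂ) * g t) +
            Complex.I *
              ∫ t : ℝ, (((x - t) / (Real.pi * ((x - t) ^ 2 + y ^ 2)) : ℝ) : ℂ) * g t) := by
  intro x y hy
  set z : ℂ := (x:ℂ) + (y:ℂ) * Complex.I with hz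
  have hbC : (b:ℂ) ≠ 0 := Complex.ofReal_ne_zero.mpr hb.ne'
  have hπC : ((Real.pi:ℝ):ℂ) ≠ 0 := Complex.ofReal_ne_zero.mpr Real.pi_ne_zero
  set C : ℂ := (2 * (Real.pi:ℂ) * (b:ℂ))⁻¹ with hC
  set E : ℂ := Complex.exp (-(Complex.I) * (a:ℂ) * z ^ 2 / (2 * (b:ℂ))) with hE
  set s : ℝ → ℂ := fun t => Complex.I * (z - (t:ℂ)) / (b:ℂ) with hs_def
  -- real part of s t
  have hsform : ∀ t : ℝ, s t = (((-y/b) : ℝ) : ℂ) + (((x-t)/b : ℝ) : ℂ) * Complex.I := by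
    intro t
    simp only [hs_def, hz]
    push_cast
    field_simp
    linear_combination (y:ℂ) * Complex.I_sq
  have hsre : ∀ t : ℝ, (s t).re = -y / b := by
    intro t
    rw [hsform t]
    simp
  -- integrability of g
  have hgInt : Integrable g := by
    refine (integrable_congr (Filter.Eventually.of_forall fun t => (hg t).symm)).mp ?_
    refine hf1.bdd_mul (c := 1) ?_ (Filter.Eventually.of_forall fun t => ?_)
    · exact (Complex.continuous_exp.comp (by continuity)).aestronglyMeasurable
    · rw [Complex.norm_exp, Complex.I_mul_re, Complex.ofReal_im]
      simp
  -- kernel product identity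
  have hker : ∀ ω t : ℝ,
      lctKernelInv a b c d z ω * (lctKernel a b c d ω t * f t)
        = C * E * (Complex.exp (s t * (ω:ℂ)) * g t) := by
    intro ω t
    rw [hg t]
    simp only [lctKernelInv, lctKernel]
    have h2 : ∀ (A B e1 e2 F : ℂ), (A⁻¹ * Complex.exp e1) * ((B⁻¹ * Complex.exp e2) * F)
        = (B * A)⁻¹ * (Complex.exp (e1 + e2) * F) := by
      intro A B e1 e2 F; rw [Complex.exp_add, mul_inv]; ring
    rw [h2, sqrtK hb, ← hC]
    have hexp : Complex.I *
        (-(a : ℂ) * z ^ 2 / (2 * (b : ℂ)) + z * (ω : ℂ) / (b : ℂ) -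
          (d : ℂ) * (ω : ℂ) ^ 2 / (2 * (b : ℂ)))
        + Complex.I * ((d * ω ^ 2 / (2 * b) - ω * t / b + a * t ^ 2 / (2 * b) : ℝ) : ℂ)
        = (-(Complex.I) * (a:ℂ) * z ^ 2 / (2 * (b:ℂ)))
          + (s t * (ω:ℂ) + Complex.I * ((a * t ^ 2 / (2 * b) : ℝ) : ℂ)) := by
      rw [hs_def]; push_cast; ring
    rw [hexp, Complex.exp_add, Complex.exp_add, ← hE]
    ring
  -- rewrite the ω-integrand
  have hlhs1 : ∀ ω : ℝ, lctKernelInv a b c d z ω * lct a b c d f ω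
      = ∫ t : ℝ, C * E * (Complex.exp (s t * (ω:ℂ)) * g t) := by
    intro ω
    simp only [lct]
    rw [← integral_const_mul]
    exact integral_congr_ae (Filter.Eventually.of_forall fun t => hker ω t)
  have hyb : 0 < y / b := div_pos hy hb
  have hsre' : ∀ t : ℝ, (s t).re < 0 := by
    intro t; rw [hsre t]; rw [neg_div]; exact neg_neg_iff_pos.mpr hyb
  have hst0 : ∀ t : ℝ, s t ≠ 0 := by
    intro t h
    have := hsre' t
    rw [h] at this
    simp at this
  -- Fubini
  have hcontexp : Continuous fun p : ℝ × ℝ => Complex.exp (s p.2 * (p.1:ℂ)) := by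
    apply Complex.continuous_exp.comp
    simp only [hs_def]
    fun_prop
  have hFint : Integrable (fun p : ℝ × ℝ => C * E * (Complex.exp (s p.2 * (p.1:ℂ)) * g p.2))
      ((volume.restrict (Set.Ioi (0:ℝ))).prod volume) := by
    have hbound : Integrable (fun p : ℝ × ℝ => ‖C*E‖ * (Real.exp (-(y/b) * p.1) * ‖g p.2‖))
        ((volume.restrict (Set.Ioi (0:ℝ))).prod volume) :=
      ((exp_neg_integrableOn_Ioi 0 hyb).mul_prod hgInt.norm).const_mul _
    refine hbound.mono' ?_ ?_
    · exact continuous_const.aestronglyMeasurable.mul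
        (hcontexp.aestronglyMeasurable.mul hgInt.1.comp_snd)
    · filter_upwards with p
      have hre1 : (s p.2 * (p.1:ℂ)).re = -(y/b) * p.1 := by
        rw [Complex.mul_re, hsre p.2]
        simp
        ring
      have hE1 : ‖Complex.exp (s p.2 * (p.1:ℂ))‖ = Real.exp (-(y/b) * p.1) := by
        rw [Complex.norm_exp, hre1]
      simp only [norm_mul, hE1]
      exact le_rfl
  have hswap : (∫ ω in Set.Ioi (0:ℝ), ∫ t : ℝ, C * E * (Complex.exp (s t * (ω:ℂ)) * g t))
      = ∫ t : ℝ, ∫ ω in Set.Ioi (0:ℝ), C * E * (Complex.exp (s t * (ω:ℂ)) * g t) :=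
    integral_integral_swap hFint
  -- inner integral
  have hinner : ∀ t : ℝ, (∫ ω in Set.Ioi (0:ℝ), C * E * (Complex.exp (s t * (ω:ℂ)) * g t))
      = (C * E * g t) * (-(s t)⁻¹) := by
    intro t
    have h1 : (∫ ω in Set.Ioi (0:ℝ), C * E * (Complex.exp (s t * (ω:ℂ)) * g t))
        = (C * E * g t) * ∫ ω in Set.Ioi (0:ℝ), Complex.exp (s t * (ω:ℂ)) := by
      rw [← integral_const_mul]
      exact integral_congr_ae (Filter.Eventually.of_forall fun ω => by ring)
    rw [h1, integral_cexp_mul_Ioi (hsre' t)]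
  -- pointwise Poisson kernel identity
  have hkey : ∀ t : ℝ, 2 * C * (-(s t)⁻¹)
      = ((y / (Real.pi * ((x - t) ^ 2 + y ^ 2)) : ℝ) : ℂ)
        + Complex.I * (((x - t) / (Real.pi * ((x - t) ^ 2 + y ^ 2)) : ℝ) : ℂ) := by
    intro t
    have hD : (0:ℝ) < (x - t) ^ 2 + y ^ 2 := by positivity
    apply mul_right_cancel₀ (hst0 t)
    have hL : 2 * C * (-(s t)⁻¹) * s t = -2 * C := by
      field_simp [hst0 t]
    rw [hL, hsform t, hC]
    have hDC : (((x - t) ^ 2 + y ^ 2 : ℝ) : ℂ) ≠ 0 := Complex.ofReal_ne_zero.mpr hD.ne'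
    push_cast
    push_cast at hDC
    field_simp
    linear_combination (-((x:ℂ)-(t:ℂ))^2) * Complex.I_sq
  -- integrability of the Poisson integrands
  have hdenc : Continuous fun t : ℝ => Real.pi * ((x - t) ^ 2 + y ^ 2) :=
    continuous_const.mul (((continuous_const.sub continuous_id).pow 2).add continuous_const)
  have hPint : Integrable (fun t : ℝ =>
      ((y / (Real.pi * ((x - t) ^ 2 + y ^ 2)) : ℝ) : ℂ) * g t) := by
    refine hgInt.bdd_mul (c := 1 / (Real.pi * y)) ?_ (Filter.Eventually.of_forall fun t => ?_)
    · refine (Complex.continuous_ofReal.comp ?_).aestronglyMeasurable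
      exact continuous_const.div hdenc fun t => by positivity
    · rw [Complex.norm_real, Real.norm_eq_abs, _root_.abs_of_nonneg (by positivity)]
      rw [div_le_div_iff₀ (by positivity) (by positivity)]
      nlinarith [sq_nonneg (x - t), Real.pi_pos]
  have hQint : Integrable (fun t : ℝ =>
      (((x - t) / (Real.pi * ((x - t) ^ 2 + y ^ 2)) : ℝ) : ℂ) * g t) := by
    refine hgInt.bdd_mul (c := 1 / (Real.pi * (2 * y))) ?_ (Filter.Eventually.of_forall fun t => ?_)
    · refine (Complex.continuous_ofReal.comp ?_).aestronglyMeasurable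
      exact (continuous_const.sub continuous_id).div hdenc fun t => by positivity
    · rw [Complex.norm_real, Real.norm_eq_abs, abs_div, _root_.abs_of_nonneg (by positivity : (0:ℝ) ≤ Real.pi * ((x - t) ^ 2 + y ^ 2))]
      rw [div_le_div_iff₀ (by positivity) (by positivity)]
      nlinarith [sq_nonneg (|x - t| - y), _root_.sq_abs (x - t), Real.pi_pos, abs_nonneg (x - t)]
  -- put everything together
  calc 2 * ∫ ω in Set.Ioi (0:ℝ), lctKernelInv a b c d z ω * lct a b c d f ω
      = 2 * ∫ ω in Set.Ioi (0:ℝ), ∫ t : ℝ, C * E * (Complex.exp (s t * (ω:ℂ)) * g t) := by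
        rw [integral_congr_ae (Filter.Eventually.of_forall hlhs1)]
    _ = 2 * ∫ t : ℝ, ∫ ω in Set.Ioi (0:ℝ), C * E * (Complex.exp (s t * (ω:ℂ)) * g t) := by
        rw [hswap]
    _ = 2 * ∫ t : ℝ, (C * E * g t) * (-(s t)⁻¹) := by
        rw [integral_congr_ae (Filter.Eventually.of_forall hinner)]
    _ = ∫ t : ℝ, (E * (((y / (Real.pi * ((x - t) ^ 2 + y ^ 2)) : ℝ) : ℂ) * g t)
          + (E * Complex.I) * ((((x - t) / (Real.pi * ((x - t) ^ 2 + y ^ 2)) : ℝ) : ℂ) * g t)) := by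
        rw [← integral_const_mul]
        refine integral_congr_ae (Filter.Eventually.of_forall fun t => ?_)
        have := hkey t
        calc 2 * ((C * E * g t) * (-(s t)⁻¹)) = (2 * C * (-(s t)⁻¹)) * (E * g t) := by ring
          _ = _ := by rw [this]; ring
    _ = E * (∫ t : ℝ, ((y / (Real.pi * ((x - t) ^ 2 + y ^ 2)) : ℝ) : ℂ) * g t)
          + (E * Complex.I) * ∫ t : ℝ, (((x - t) / (Real.pi * ((x - t) ^ 2 + y ^ 2)) : ℝ) : ℂ) * g t := by
        rw [integral_add (hPint.const_mul E) (hQint.const_mul (E * Complex.I)),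
          integral_const_mul, integral_const_mul]
    _ = E * ((∫ t : ℝ, ((y / (Real.pi * ((x - t) ^ 2 + y ^ 2)) : ℝ) : ℂ) * g t)
          + Complex.I * ∫ t : ℝ, (((x - t) / (Real.pi * ((x - t) ^ 2 + y ^ 2)) : ℝ) : ℂ) * g t) := by
        ring
end

section
/- Let a, b, c, d be real numbers with ad − bc = 1 and b > 0, let f ∈ L¹(ℝ) ∩ L²(ℝ) with F^{(a,b,c,d)} ∈ L¹(ℝ), and set g(t) = e^{i a t²/(2b)} f(t). Then for every z in the upper half-plane, 2 ∫₀^∞ K^{(d,−b,−c,a)}(z, ω) F^{(a,b,c,d)}(ω) dω = 2 e^{−i a z²/(2b)} ∫₀^∞ K^{(0,−1,1,0)}(z, ω) G^{(0,1,−1,0)}(ω) dω, where K^{(0,−1,1,0)}(z, ω) = (1/√(−2πi)) e^{izω} and G^{(0,1,−1,0)}(ω) = (1/√(2πi)) ∫_ℝ e^{−iωt} g(t) dt. -/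
open MeasureTheory Complex Filter Topology

lemma sqrtImul (x : ℝ) (hx : 0 < x) :
    ((x : ℂ) * Complex.I) ^ ((2:ℂ)⁻¹) * (-((x : ℂ) * Complex.I)) ^ ((2:ℂ)⁻¹) = (x : ℂ) := by
  have hxC : (x : ℂ) ≠ 0 := by exact_mod_cast hx.ne'
  have h1 : ((x : ℂ) * Complex.I) ≠ 0 := by simp [hxC, Complex.I_ne_zero]
  have h2 : (-((x : ℂ) * Complex.I)) ≠ 0 := by simpa using h1
  rw [Complex.cpow_def_of_ne_zero h1, Complex.cpow_def_of_ne_zero h2, ← Complex.exp_add,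
    ← add_mul]
  have hl1 : Complex.log ((x : ℂ) * Complex.I) = Real.log x + Complex.log Complex.I :=
    Complex.log_ofReal_mul hx Complex.I_ne_zero
  have hl2 : Complex.log (-((x : ℂ) * Complex.I)) = Real.log x + Complex.log (-Complex.I) := by
    rw [show -((x : ℂ) * Complex.I) = (x : ℂ) * (-Complex.I) by ring]
    exact Complex.log_ofReal_mul hx (by simp [Complex.I_ne_zero])
  rw [hl1, hl2, Complex.log_I, Complex.log_neg_I]
  have : (↑(Real.log x) + ↑Real.pi / 2 * Complex.I +
      (↑(Real.log x) + -(↑Real.pi / 2) * Complex.I)) * (2:ℂ)⁻¹ = (Real.log x : ℂ) := by ring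
  rw [this, ← Complex.ofReal_exp, Real.exp_log hx]

/-- the generalized analytic signal equals a chirp times a
Fourier-type analytic extension of `g`. -/
theorem generalized_analytic_signal_chirp_repr
    (a b c d : ℝ) (hb : 0 < b) (habcd : a * d - b * c = 1)
    (f : ℝ → ℂ) (hf1 : Integrable f) (hf2 : MemLp f 2)
    (hF : Integrable (lct a b c d f))
    (g : ℝ → ℂ)
    (hg : ∀ t : ℝ, g t = Complex.exp (Complex.I * ((a * t ^ 2 / (2 * b) : ℝ) : ℂ)) * f t) :
    ∀ z : ℂ, 0 < z.im →
      2 * ∫ ω in Set.Ioi (0 : ℝ), lctKernelInv a b c d z ω * lct a b c d f ω =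
        2 * Complex.exp (-(Complex.I) * (a : ℂ) * z ^ 2 / (2 * (b : ℂ))) *
          ∫ ω in Set.Ioi (0 : ℝ),
            (((-2 * Real.pi * Complex.I) ^ ((2 : ℂ)⁻¹))⁻¹ *
              Complex.exp (Complex.I * z * (ω : ℂ))) * lct 0 1 (-1) 0 g ω := by
  intro z hz
  have hbC : (b : ℂ) ≠ 0 := by exact_mod_cast hb.ne'
  have hpb : (0:ℝ) < 2 * Real.pi * b := by positivity
  have hp : (0:ℝ) < 2 * Real.pi := by positivity
  -- base rewrites
  have e1 : (2 * (Real.pi:ℂ) * Complex.I * (b:ℂ)) = ((2*Real.pi*b : ℝ):ℂ) * Complex.I := by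
    push_cast; ring
  have e2 : (-2 * (Real.pi:ℂ) * Complex.I * (b:ℂ)) = -(((2*Real.pi*b : ℝ):ℂ) * Complex.I) := by
    push_cast; ring
  have e3 : (2 * (Real.pi:ℂ) * Complex.I * ((1:ℝ):ℂ)) = ((2*Real.pi : ℝ):ℂ) * Complex.I := by
    push_cast; ring
  have e4 : (-2 * (Real.pi:ℂ) * Complex.I) = -(((2*Real.pi : ℝ):ℂ) * Complex.I) := by
    push_cast; ring
  have hc : (((-2 * Real.pi * Complex.I * b) ^ ((2:ℂ)⁻¹))⁻¹) *
        (((2 * Real.pi * Complex.I * b) ^ ((2:ℂ)⁻¹))⁻¹)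
      = (b:ℂ)⁻¹ * ((((-2 * Real.pi * Complex.I) ^ ((2:ℂ)⁻¹))⁻¹) *
        (((2 * Real.pi * Complex.I * ((1:ℝ):ℂ)) ^ ((2:ℂ)⁻¹))⁻¹)) := by
    rw [e1, e2, e3, e4, ← mul_inv, ← mul_inv, ← mul_inv,
      mul_comm ((-(((2*Real.pi*b : ℝ):ℂ) * Complex.I)) ^ ((2:ℂ)⁻¹)),
      mul_comm ((-(((2*Real.pi : ℝ):ℂ) * Complex.I)) ^ ((2:ℂ)⁻¹)),
      sqrtImul _ hpb, sqrtImul _ hp]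
    rw [show ((2*Real.pi*b : ℝ):ℂ) = (b:ℂ) * ((2*Real.pi : ℝ):ℂ) by push_cast; ring, mul_inv]
  set Φ : ℝ → ℂ := fun u =>
    ((b:ℂ)⁻¹ * Complex.exp (-(Complex.I) * (a:ℂ) * z ^ 2 / (2 * (b:ℂ)))) *
      ((((-2 * Real.pi * Complex.I) ^ ((2 : ℂ)⁻¹))⁻¹ *
        Complex.exp (Complex.I * z * (u : ℂ))) * lct 0 1 (-1) 0 g u) with hΦ
  have main : ∀ ω : ℝ, lctKernelInv a b c d z ω * lct a b c d f ω = Φ (b⁻¹ * ω) := by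
    intro ω
    rw [hΦ]
    simp only []
    unfold lctKernelInv lct lctKernel
    rw [← integral_const_mul, ← integral_const_mul, ← integral_const_mul]
    refine integral_congr_ae (Filter.Eventually.of_forall fun x => ?_)
    dsimp only
    rw [hg x]
    have he : Complex.exp (Complex.I * (-(a:ℂ) * z ^ 2 / (2 * (b:ℂ)) + z * (ω:ℂ) / (b:ℂ) -
          (d:ℂ) * (ω:ℂ) ^ 2 / (2 * (b:ℂ)))) *
        Complex.exp (Complex.I * ((d * ω ^ 2 / (2 * b) - ω * x / b + a * x ^ 2 / (2 * b) : ℝ) : ℂ))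
      = Complex.exp (-(Complex.I) * (a:ℂ) * z ^ 2 / (2 * (b:ℂ))) *
        (Complex.exp (Complex.I * z * ((b⁻¹ * ω : ℝ) : ℂ)) *
        (Complex.exp (Complex.I * ((0 * (b⁻¹ * ω) ^ 2 / (2 * 1) - b⁻¹ * ω * x / 1 +
            0 * x ^ 2 / (2 * 1) : ℝ) : ℂ)) *
         Complex.exp (Complex.I * ((a * x ^ 2 / (2 * b) : ℝ) : ℂ)))) := by
      rw [← Complex.exp_add, ← Complex.exp_add, ← Complex.exp_add, ← Complex.exp_add]
      congr 1
      push_cast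
      ring
    linear_combination
      (Complex.exp (Complex.I * (-(a:ℂ) * z ^ 2 / (2 * (b:ℂ)) + z * (ω:ℂ) / (b:ℂ) -
          (d:ℂ) * (ω:ℂ) ^ 2 / (2 * (b:ℂ)))) *
        Complex.exp (Complex.I * ((d * ω ^ 2 / (2 * b) - ω * x / b + a * x ^ 2 / (2 * b) : ℝ) : ℂ))
        * f x) * hc +
      ((b:ℂ)⁻¹ * ((((-2 * Real.pi * Complex.I) ^ ((2:ℂ)⁻¹))⁻¹) *
        (((2 * Real.pi * Complex.I * ((1:ℝ):ℂ)) ^ ((2:ℂ)⁻¹))⁻¹) * f x)) * he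
  simp only [main]
  rw [MeasureTheory.integral_comp_mul_left_Ioi Φ 0 (inv_pos.mpr hb)]
  simp only [inv_inv, mul_zero]
  rw [hΦ]
  rw [integral_const_mul]
  rw [Complex.real_smul]
  field_simp
end

section
/- Let a, b, c, d be real numbers with ad − bc = 1 and b > 0, and let f ∈ L¹(ℝ) be such that F^{(a,b,c,d)} ∈ L¹(ℝ). Then for almost every x ∈ ℝ, f(x) = ∫_ℝ K^{(d,−b,−c,a)}(x, ω) F^{(a,b,c,d)}(ω) dω. -/
open MeasureTheory Complex Filter Topology

section Aux

open FourierTransform Real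
open scoped ContDiff

noncomputable def myToSchwartz (g : ℝ → ℂ) (hg : ContDiff ℝ ∞ g)
    (hsupp : HasCompactSupport g) : SchwartzMap ℝ ℂ where
  toFun := g
  smooth' := hg
  decay' := by
    intro k n
    have h1 : Continuous fun x : ℝ ↦ ‖x‖ ^ k * ‖iteratedFDeriv ℝ n g x‖ :=
      ((continuous_norm.pow k).mul (hg.continuous_iteratedFDeriv (mod_cast le_top)).norm)
    have h2 : HasCompactSupport fun x : ℝ ↦ ‖x‖ ^ k * ‖iteratedFDeriv ℝ n g x‖ :=
      HasCompactSupport.mul_left (hsupp.iteratedFDeriv n).norm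
    obtain ⟨C, hC⟩ := h2.exists_bound_of_continuous h1
    exact ⟨C, fun x ↦ (le_abs_self _).trans ((Real.norm_eq_abs _) ▸ hC x)⟩

lemma my_mult_formula {f g : ℝ → ℂ} (hf : Integrable f) (hg : Integrable g) :
    ∫ ξ, 𝓕 f ξ * g ξ = ∫ x, f x * 𝓕 g x := by
  have := VectorFourier.integral_fourierIntegral_smul_eq_flip (L := innerₗ ℝ) (μ := volume)
    (ν := volume) Real.continuous_fourierChar continuous_inner hf hg
  have hflip : (innerₗ ℝ).flip = innerₗ ℝ :=
    LinearMap.ext fun x ↦ LinearMap.ext fun y ↦ by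
      simp only [LinearMap.flip_apply, innerₗ_apply_apply]
      exact real_inner_comm x y
  rw [hflip] at this
  simp only [smul_eq_mul] at this
  exact this

lemma my_fourier_inversion_ae {f : ℝ → ℂ} (hf : Integrable f) (h'f : Integrable (𝓕 f)) :
    ∀ᵐ x : ℝ, f x = 𝓕⁻ (𝓕 f) x := by
  have hcont : Continuous (𝓕⁻ (𝓕 f)) := by
    apply VectorFourier.fourierIntegral_continuous Real.continuous_fourierChar
      (continuous_inner.neg) h'f
  apply ae_eq_of_integral_contDiff_smul_eq hf.locallyIntegrable
    hcont.locallyIntegrable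
  intro g g_diff g_supp
  set ψ : ℝ → ℂ := fun x ↦ (g x : ℂ) with hψdef
  have hψ_diff : ContDiff ℝ ∞ ψ := Complex.ofRealCLM.contDiff.comp g_diff
  have hψ_supp : HasCompactSupport ψ := g_supp.comp_left (g := Complex.ofReal) Complex.ofReal_zero
  have hψ_cont : Continuous ψ := hψ_diff.continuous
  have hψ_int : Integrable ψ := hψ_cont.integrable_of_hasCompactSupport hψ_supp
  have hFψ_int : Integrable (𝓕 ψ) := by
    have : 𝓕 ψ = (FourierTransform.fourierCLE ℂ (SchwartzMap ℝ ℂ) (myToSchwartz ψ hψ_diff hψ_supp)) := by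
      rw [FourierTransform.fourierCLE_apply, SchwartzMap.fourier_coe]; rfl
    rw [this]
    exact SchwartzMap.integrable _
  have hFψinv_int : Integrable (𝓕⁻ ψ) := by
    have : 𝓕⁻ ψ = fun x ↦ 𝓕 ψ (-x) := by
      ext x; exact Real.fourierInv_eq_fourier_neg ψ x
    rw [this]
    exact hFψ_int.comp_neg
  have hψneg_int : Integrable (fun x ↦ ψ (-x)) := hψ_int.comp_neg
  have key : ∫ x, ψ x * 𝓕⁻ (𝓕 f) x = ∫ x, ψ x * f x := by
    calc ∫ x, ψ x * 𝓕⁻ (𝓕 f) x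
        = ∫ x, ψ x * 𝓕 (𝓕 f) (-x) := by
          simp_rw [Real.fourierInv_eq_fourier_neg]
      _ = ∫ x, ψ (-x) * 𝓕 (𝓕 f) x := by
          rw [← MeasureTheory.integral_neg_eq_self (fun x ↦ ψ (-x) * 𝓕 (𝓕 f) x)]
          simp
      _ = ∫ x, 𝓕 (𝓕 f) x * ψ (-x) := by simp_rw [mul_comm]
      _ = ∫ x, 𝓕 f x * 𝓕 (fun y ↦ ψ (-y)) x := my_mult_formula h'f hψneg_int
      _ = ∫ x, 𝓕 f x * 𝓕⁻ ψ x := by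
          rw [← Real.fourierInv_eq_fourier_comp_neg]
      _ = ∫ x, f x * 𝓕 (𝓕⁻ ψ) x := my_mult_formula hf hFψinv_int
      _ = ∫ x, f x * ψ x := by
          rw [hψ_cont.fourier_fourierInv_eq hψ_int hFψ_int]
      _ = ∫ x, ψ x * f x := by simp_rw [mul_comm]
  have hsm : ∀ (h : ℝ → ℂ), ∫ x, g x • h x = ∫ x, ψ x * h x := by
    intro h
    simp_rw [hψdef, Complex.real_smul]
  rw [hsm, hsm, key]

lemma my_sqrt_prod (b : ℝ) (hb : 0 < b) :
    (2 * (π:ℂ) * I * b) ^ ((2:ℂ)⁻¹) * ((-2) * (π:ℂ) * I * b) ^ ((2:ℂ)⁻¹)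
      = ((2 * π * b : ℝ) : ℂ) := by
  set z : ℂ := 2 * (π:ℂ) * I * b with hz
  have hzim : z.im = 2 * π * b := by simp [hz]
  have hzne : z ≠ 0 := by
    intro h
    rw [Complex.ext_iff] at h
    have := h.2
    rw [hzim] at this
    have hpos : (0:ℝ) < 2 * π * b := by positivity
    simp only [Complex.zero_im] at this
    linarith
  have harg : z.arg ≠ π := by
    intro h
    rw [Complex.arg_eq_pi_iff] at h
    rw [hzim] at h
    nlinarith [Real.pi_pos, h.2]
  have hconj : ((-2) * (π:ℂ) * I * b) = (starRingEnd ℂ) z := by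
    rw [hz]
    simp only [map_mul, Complex.conj_I, Complex.conj_ofReal]
    rw [show (starRingEnd ℂ) (2:ℂ) = 2 from map_ofNat _ 2]
    ring
  rw [hconj, Complex.conj_cpow _ _ harg]
  have h2 : (starRingEnd ℂ) ((2:ℂ)⁻¹) = (2:ℂ)⁻¹ := by
    rw [map_inv₀, show (starRingEnd ℂ) (2:ℂ) = 2 from map_ofNat _ 2]
  rw [h2, Complex.mul_conj]
  have habs : ‖z‖ = 2 * π * b := by
    rw [hz]
    simp only [norm_mul, Complex.norm_I, Complex.norm_real, Complex.norm_two, Real.norm_eq_abs]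
    rw [abs_of_pos Real.pi_pos, abs_of_pos hb]
    ring
  have : Complex.normSq (z ^ ((2:ℂ)⁻¹)) = 2 * π * b := by
    rw [Complex.normSq_eq_norm_sq]
    have h3 : (2:ℂ)⁻¹ = ((2⁻¹ : ℝ) : ℂ) := by norm_num
    rw [h3, Complex.norm_cpow_real, habs]
    rw [← Real.rpow_natCast _ 2, ← Real.rpow_mul (by positivity)]
    norm_num
  rw [this]

lemma my_norm_exp_I_mul (r : ℝ) : ‖Complex.exp (Complex.I * (r:ℂ))‖ = 1 := by
  rw [Complex.norm_exp]
  simp [Complex.mul_re]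

lemma my_norm_exp_neg_I_mul (r : ℝ) : ‖Complex.exp (-(Complex.I * (r:ℂ)))‖ = 1 := by
  rw [Complex.norm_exp]
  simp [Complex.mul_re]

lemma my_cancel (u v w : ℂ) (hu : u ≠ 0) :
    Complex.exp (-v) * (u * (u⁻¹ * (Complex.exp v * w))) = w := by
  field_simp [Complex.exp_ne_zero]
  rw [← Complex.exp_add, neg_add_cancel, Complex.exp_zero, one_mul]

end Aux

open FourierTransform Real

/-- the inversion formula for the LCT. -/
theorem lct_inversion
    (a b c d : ℝ) (hb : 0 < b) (habcd : a * d - b * c = 1)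
    (f : ℝ → ℂ) (hf : Integrable f) (hF : Integrable (lct a b c d f)) :
    ∀ᵐ x : ℝ, f x = ∫ ω : ℝ, lctKernelInv a b c d (x : ℂ) ω * lct a b c d f ω := by
  have hbne : (b:ℝ) ≠ 0 := hb.ne'
  have hbnec : (b:ℂ) ≠ 0 := by exact_mod_cast hbne
  have hπ : (π:ℝ) ≠ 0 := Real.pi_ne_zero
  have hπc : (π:ℂ) ≠ 0 := by exact_mod_cast hπ
  set z : ℂ := 2 * (π:ℂ) * I * b with hz
  set zc : ℂ := (-2) * (π:ℂ) * I * b with hzc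
  have hzne : z ≠ 0 :=
    mul_ne_zero (mul_ne_zero (mul_ne_zero two_ne_zero hπc) I_ne_zero) hbnec
  have hCne : (z ^ ((2:ℂ)⁻¹)) ≠ 0 := by
    rw [Ne, Complex.cpow_eq_zero_iff]
    tauto
  set g : ℝ → ℂ := fun x ↦ Complex.exp (Complex.I * ((a * x^2 / (2*b) : ℝ) : ℂ)) * f x with hgdef
  have hchirp_cont : Continuous fun x : ℝ ↦ Complex.exp (Complex.I * ((a * x^2 / (2*b) : ℝ) : ℂ)) := by
    fun_prop
  have hg_int : Integrable g :=
    hf.bdd_mul hchirp_cont.aestronglyMeasurable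
      (Eventually.of_forall fun x ↦ le_of_eq (my_norm_exp_I_mul _))
  -- KEY identity
  have hkey : ∀ ω : ℝ, lct a b c d f ω
      = (z ^ ((2:ℂ)⁻¹))⁻¹ * Complex.exp (Complex.I * ((d * ω^2 / (2*b) : ℝ) : ℂ))
        * 𝓕 g (ω / (2*π*b)) := by
    intro ω
    have hpt : ∀ x : ℝ, lctKernel a b c d ω x * f x
        = (z ^ ((2:ℂ)⁻¹))⁻¹ * Complex.exp (Complex.I * ((d * ω^2 / (2*b) : ℝ) : ℂ))
          * (Complex.exp (((-2 * π * x * (ω / (2*π*b)) : ℝ) : ℂ) * Complex.I) * g x) := by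
      intro x
      have hR : (-2 * π * x * (ω / (2*π*b)) : ℝ) = -(ω * x / b) := by
        field_simp
      have hA : Complex.I * ((d * ω ^ 2 / (2 * b) - ω * x / b + a * x ^ 2 / (2 * b) : ℝ) : ℂ)
          = Complex.I * ((d * ω^2 / (2*b) : ℝ) : ℂ)
            + ((((-2 * π * x * (ω / (2*π*b)) : ℝ)) : ℂ) * Complex.I
              + Complex.I * ((a * x^2 / (2*b) : ℝ) : ℂ)) := by
        rw [hR]
        push_cast
        ring
      simp only [lctKernel, hgdef]
      rw [hA, Complex.exp_add, Complex.exp_add]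
      ring
    simp only [lct]
    simp only [hpt]
    rw [MeasureTheory.integral_const_mul]
    rw [Real.fourier_real_eq_integral_exp_smul]
    simp_rw [smul_eq_mul]
  -- integrability of 𝓕 g
  have hFG' : Integrable (fun ω : ℝ ↦ 𝓕 g (ω * (2*π*b)⁻¹)) := by
    have heq : (fun ω : ℝ ↦ 𝓕 g (ω * (2*π*b)⁻¹))
        = fun ω : ℝ ↦ Complex.exp (-(Complex.I * ((d * ω^2 / (2*b) : ℝ) : ℂ)))
            * ((z ^ ((2:ℂ)⁻¹)) * lct a b c d f ω) := by
      funext ω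
      rw [show ω * (2*π*b)⁻¹ = ω / (2*π*b) from (div_eq_mul_inv ω _).symm, hkey ω,
        mul_assoc ((z ^ ((2:ℂ)⁻¹))⁻¹) _ _]
      exact (my_cancel _ _ _ hCne).symm
    rw [heq]
    apply (hF.const_mul _).bdd_mul
    · exact (Continuous.aestronglyMeasurable (by fun_prop))
    · exact Eventually.of_forall fun ω ↦ le_of_eq (my_norm_exp_neg_I_mul _)
  have h2πb : ((2*π*b : ℝ))⁻¹ ≠ 0 := by positivity
  have hFG : Integrable (𝓕 g) := (integrable_comp_mul_right_iff (𝓕 g) h2πb).mp hFG'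
  -- a.e. inversion for g
  filter_upwards [my_fourier_inversion_ae hg_int hFG] with x hx
  -- pointwise identity for the inverse integrand
  set K0 : ℂ := (z ^ ((2:ℂ)⁻¹))⁻¹ * (zc ^ ((2:ℂ)⁻¹))⁻¹
      * Complex.exp (-(Complex.I * ((a * x^2 / (2*b) : ℝ) : ℂ))) with hK0
  set h : ℝ → ℂ := fun ξ ↦ Complex.exp (((2 * π * (ξ * x) : ℝ) : ℂ) * Complex.I) * 𝓕 g ξ
    with hhdef
  have hpt : ∀ ω : ℝ, lctKernelInv a b c d (x : ℂ) ω * lct a b c d f ω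
      = K0 * h (ω * (2*π*b)⁻¹) := by
    intro ω
    have hE : Complex.I * (-(a : ℂ) * (x:ℂ) ^ 2 / (2 * (b : ℂ)) + (x:ℂ) * (ω : ℂ) / (b : ℂ) -
          (d : ℂ) * (ω : ℂ) ^ 2 / (2 * (b : ℂ)))
        + Complex.I * ((d * ω^2 / (2*b) : ℝ) : ℂ)
        = -(Complex.I * ((a * x^2 / (2*b) : ℝ) : ℂ))
          + (((2 * π * ((ω * (2*π*b)⁻¹) * x) : ℝ) : ℂ) * Complex.I) := by
      have hR2 : (2 * π * ((ω * (2*π*b)⁻¹) * x) : ℝ) = x * ω / b := by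
        field_simp
      rw [hR2]
      push_cast
      ring
    calc lctKernelInv a b c d (x : ℂ) ω * lct a b c d f ω
        = (zc ^ ((2:ℂ)⁻¹))⁻¹ * (z ^ ((2:ℂ)⁻¹))⁻¹
            * Complex.exp (Complex.I * (-(a : ℂ) * (x:ℂ) ^ 2 / (2 * (b : ℂ)) +
                (x:ℂ) * (ω : ℂ) / (b : ℂ) - (d : ℂ) * (ω : ℂ) ^ 2 / (2 * (b : ℂ)))
              + Complex.I * ((d * ω^2 / (2*b) : ℝ) : ℂ))
            * 𝓕 g (ω * (2*π*b)⁻¹) := by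
          simp only [lctKernelInv]
          rw [hkey ω, Complex.exp_add,
            show ω / (2*π*b) = ω * (2*π*b)⁻¹ from div_eq_mul_inv ω _]
          push_cast
          ring
      _ = K0 * h (ω * (2*π*b)⁻¹) := by
          rw [hE, Complex.exp_add, hK0, hhdef]
          ring
  rw [MeasureTheory.integral_congr_ae (Eventually.of_forall hpt)]
  rw [MeasureTheory.integral_const_mul]
  rw [MeasureTheory.Measure.integral_comp_mul_right h (2*π*b)⁻¹]
  have hinv : ∫ ξ, h ξ = 𝓕⁻ (𝓕 g) x := by
    rw [Real.fourierInv_eq']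
    simp_rw [hhdef, smul_eq_mul, RCLike.inner_apply', starRingEnd_apply, star_trivial]
  rw [hinv, ← hx]
  rw [inv_inv, abs_of_pos (by positivity : (0:ℝ) < 2*π*b)]
  -- now: f x = K0 * ((2*π*b) • g x)
  have hprod : (z ^ ((2:ℂ)⁻¹))⁻¹ * (zc ^ ((2:ℂ)⁻¹))⁻¹ = (((2*π*b : ℝ)) : ℂ)⁻¹ := by
    rw [← mul_inv, my_sqrt_prod b hb]
  have h2πbc : (((2*π*b : ℝ)) : ℂ) ≠ 0 := by
    simp only [ne_eq, Complex.ofReal_eq_zero]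
    positivity
  rw [hK0, hprod, hgdef]
  simp only [real_smul]
  rw [Complex.exp_neg]
  field_simp [Complex.exp_ne_zero]
end
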